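/- Let G = ⟨A, x | x² = y, xax⁻¹ = f(a)⟩ with A finite abelian of order ≥ 3, f ∈ Aut(A) of order 2, f(y) = y, and B = {f(a)a⁻¹ : a ∈ A}. Then G has exactly 2·[A:B] inequivalent one-dimensional representations. -/

import Mathlib

lemma comm_aux1 {H : Type*} [Group H] (hc : ∀ a b : H, a * b = b * a) (p c a : H) :
    (p * c) * (c * a)⁻¹ = p * a⁻¹ := by
  letI : CommGroup H := { ‹Group H› with mul_comm := hc }
  simp [mul_inv_rev, mul_comm, mul_left_comm, mul_assoc]

lemma comm_aux2 {H : Type*} [Group H] (hc : ∀ a b : H, a * b = b * a) (p q c a b : H) :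
    (p * c * b) * (q * c * a)⁻¹ = (p * a⁻¹) * (q * b⁻¹)⁻¹ := by
  letI : CommGroup H := { ‹Group H› with mul_comm := hc }
  have h1 : (p * c * b) = (p * b) * c := by rw [mul_assoc, mul_comm c b, ← mul_assoc]
  have h2 : (q * c * a) = (q * a) * c := by rw [mul_assoc, mul_comm c a, ← mul_assoc]
  rw [h1, h2, mul_inv_rev, mul_assoc (p*b), mul_inv_cancel_left]
  simp [mul_inv_rev, mul_comm, mul_left_comm, mul_assoc]

/-- `G = ⟨A, x | x² = y, xax⁻¹ = f(a)⟩` has exactly `2·[A:B]` distinct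
one-dimensional representations, where `B = {f(a)a⁻¹ : a ∈ A}`. -/
theorem stmt_6 {G : Type*} [Group G] [Fintype G] (A : Subgroup G)
    (hA : ∀ a b : ↥A, a * b = b * a) (hcard : 3 ≤ Nat.card A) (hidx : A.index = 2)
    (f : ↥A ≃* ↥A) (hf2 : ∀ a : ↥A, f (f a) = a) (hfne : f ≠ MulEquiv.refl ↥A)
    (x : G) (hx : x ∉ A) (y : ↥A) (hy : f y = y) (hx2 : x ^ 2 = (y : G))
    (hconj : ∀ a : ↥A, x * (a : G) * x⁻¹ = ((f a : ↥A) : G)) :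
    Nat.card (G →* ℂˣ) =
      2 * (Subgroup.closure {b : ↥A | ∃ a : ↥A, b = f a * a⁻¹}).index := by
  classical
  set S : Set ↥A := {b : ↥A | ∃ a : ↥A, b = f a * a⁻¹} with hS
  set N : Subgroup G := (Subgroup.closure S).map A.subtype with hN
  -- basic relations
  have hxa : ∀ a : ↥A, x * (a : G) = ((f a : ↥A) : G) * x := fun a =>
    mul_inv_eq_iff_eq_mul.mp (hconj a)
  have hax : ∀ a : ↥A, (a : G) * x = x * ((f a : ↥A) : G) := by
    intro a; rw [hxa (f a), hf2 a]
  have hcomm : ∀ a b : ↥A, (a : G) * (b : G) = (b : G) * (a : G) := fun a b =>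
    congrArg Subtype.val (hA a b)
  have hmemN : ∀ z : ↥A, z ∈ Subgroup.closure S → ((z : ↥A) : G) ∈ N := fun z hz =>
    Subgroup.mem_map_of_mem A.subtype hz
  -- decomposition of elements of G
  have hdec : ∀ g : G, g ∈ A ∨ ∃ c : ↥A, g = x * (c : G) := by
    intro g
    by_cases hg : g ∈ A
    · exact Or.inl hg
    · have h' : x⁻¹ * g ∈ A := by
        rw [Subgroup.mul_mem_iff_of_index_two hidx]
        simp [hg, hx]
      exact Or.inr ⟨⟨x⁻¹ * g, h'⟩, (mul_inv_cancel_left x g).symm⟩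
  -- membership of the standard generators and variants
  have hgen : ∀ a : ↥A, f a * a⁻¹ ∈ Subgroup.closure S :=
    fun a => Subgroup.subset_closure ⟨a, rfl⟩
  -- key case 2 : a ∈ A, h = x * c
  have key2 : ∀ a c : ↥A, (a : G) * (x * (c : G)) * ((a : G))⁻¹ * (x * (c : G))⁻¹ ∈ N := by
    intro a c
    have h1 : (a : G) * (x * (c : G)) = x * (((f a * c : ↥A) : ↥A) : G) := by
      push_cast
      rw [← mul_assoc, hax a, mul_assoc]
    have h2 : (x * ((c : ↥A) : G)) * (a : G) = x * (((c * a : ↥A) : ↥A) : G) := by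
      push_cast
      rw [mul_assoc]
    have e : (a : G) * (x * (c : G)) * ((a : G))⁻¹ * (x * (c : G))⁻¹ =
        ((f ((f a * c) * (c * a)⁻¹) : ↥A) : G) := by
      have e0 : (a : G) * (x * (c : G)) * ((a : G))⁻¹ * (x * (c : G))⁻¹ =
          ((a : G) * (x * (c : G))) * ((x * (c : G)) * (a : G))⁻¹ := by group
      rw [e0, h1, h2, ← hconj ((f a * c) * (c * a)⁻¹)]
      push_cast
      group
    rw [e]
    apply hmemN
    have hw : f ((f a * c) * (c * a)⁻¹) = f a⁻¹ * (a⁻¹)⁻¹ := by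
      rw [comm_aux1 hA (f a) c a, map_mul, hf2, map_inv, inv_inv]
      exact hA a (f a)⁻¹
    rw [hw]
    exact hgen a⁻¹
  -- key case 4 : g = x * a, h = x * b
  have key4 : ∀ a b : ↥A,
      (x * (a : G)) * (x * (b : G)) * (x * (a : G))⁻¹ * (x * (b : G))⁻¹ ∈ N := by
    intro a b
    have hgh : ∀ p q : ↥A, (x * (p : G)) * (x * (q : G)) = ((f p * y * q : ↥A) : G) := by
      intro p q
      push_cast
      calc x * (p : G) * (x * (q : G)) = (x * (p : G)) * x * (q : G) := by group
        _ = (((f p : ↥A) : G) * x) * x * (q : G) := by rw [hxa p]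
        _ = ((f p : ↥A) : G) * x ^ 2 * (q : G) := by rw [pow_two, ← mul_assoc]
        _ = ((f p : ↥A) : G) * (y : G) * (q : G) := by rw [hx2]
    have e0 : (x * (a : G)) * (x * (b : G)) * (x * (a : G))⁻¹ * (x * (b : G))⁻¹ =
        ((x * (a : G)) * (x * (b : G))) * ((x * (b : G)) * (x * (a : G)))⁻¹ := by group
    rw [e0, hgh a b, hgh b a, ← Subgroup.coe_inv, ← Subgroup.coe_mul]
    apply hmemN
    rw [comm_aux2 hA (f a) (f b) y a b]
    exact mul_mem (hgen a) (inv_mem (hgen b))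
  -- the commutator subgroup is N
  have hcomm_eq : commutator G = N := by
    apply le_antisymm
    · rw [commutator_def, Subgroup.commutator_le]
      intro g _ h _
      rw [commutatorElement_def]
      rcases hdec g with hg | ⟨a, rfl⟩
      · rcases hdec h with hh | ⟨c, rfl⟩
        · -- both in A
          lift g to ↥A using hg with a
          lift h to ↥A using hh with b
          have e : (a : G) * (b : G) * ((a : G))⁻¹ * ((b : G))⁻¹ = 1 := by
            rw [hcomm a b]; group
          rw [e]
          exact N.one_mem
        · lift g to ↥A using hg with a
          exact key2 a c
      · rcases hdec h with hh | ⟨c, rfl⟩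
        · lift h to ↥A using hh with b
          have e : (x * (a : G)) * (b : G) * (x * (a : G))⁻¹ * ((b : G))⁻¹ =
              ((b : G) * (x * (a : G)) * ((b : G))⁻¹ * (x * (a : G))⁻¹)⁻¹ := by group
          rw [e]
          exact N.inv_mem (key2 b a)
        · exact key4 a c
    · rw [hN, Subgroup.map_le_iff_le_comap, Subgroup.closure_le]
      rintro b ⟨a, rfl⟩
      simp only [SetLike.mem_coe, Subgroup.mem_comap]
      open scoped commutatorElement in
      have e : A.subtype (f a * a⁻¹) = ⁅x, (a : G)⁆ := by
        rw [commutatorElement_def, hconj a]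
        norm_cast
      rw [e, commutator_def]
      exact Subgroup.commutator_mem_commutator (Subgroup.mem_top _) (Subgroup.mem_top _)
  -- counting
  calc Nat.card (G →* ℂˣ) = Nat.card (Abelianization G →* ℂˣ) :=
        Nat.card_congr Abelianization.lift
    _ = Nat.card (Abelianization G) := by
        obtain ⟨e⟩ := CommGroup.monoidHom_mulEquiv_of_hasEnoughRootsOfUnity (Abelianization G) ℂ
        exact Nat.card_congr e.toEquiv
    _ = (commutator G).index := rfl
    _ = 2 * (Subgroup.closure S).index := by
        rw [hcomm_eq, hN, Subgroup.index_map_subtype, hidx, mul_comm]
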